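/- Let X₁, X₂, and Y be topological spaces and let φ be a homeomorphism of X₁ × X₂ onto a dense subset Z of Y. Suppose there is a continuous map ψ : Y → X₁ × X₂ such that ψ ∘ φ is the identity map of X₁ × X₂, and such that for each pair (M₁, M₂) of maximal limit sets of X₁ and X₂, ψ⁻¹(M₁ × M₂) equals the closure of φ(M₁ × M₂) in Y. Then every maximal limit set M of Y is of the form M = ψ⁻¹(M₁ × M₂) for some maximal limit sets M₁ of X₁ and M₂ of X₂. -/
import Mathlib


/-- `L` is a limit set if there is a net (equivalently, a proper filter) converging to
every point of `L`. -/
def IsLimitSet {X : Type*} [TopologicalSpace X] (L : Set X) : Prop :=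
  ∃ F : Filter X, F.NeBot ∧ ∀ x ∈ L, F ≤ nhds x

/-- A maximal limit set is a limit set not properly contained in any other limit set. -/
def IsMaxLimitSet {X : Type*} [TopologicalSpace X] (M : Set X) : Prop :=
  IsLimitSet M ∧ ∀ L : Set X, IsLimitSet L → M ⊆ L → L = M

/-- The lower Vietoris topology on `Set X`. -/
def lowerVietoris (X : Type*) [TopologicalSpace X] : TopologicalSpace (Set X) :=
  TopologicalSpace.generateFrom
    {V : Set (Set X) | ∃ U : Set X, IsOpen U ∧ V = {F : Set X | (F ∩ U).Nonempty}}

/-- `ℳℒ(X)`: the space of maximal limit sets of `X`, with the subspace topology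
inherited from the lower Vietoris topology. -/
def MLS (X : Type*) [TopologicalSpace X] : Type _ :=
  {M : Set X // IsMaxLimitSet M}

instance (X : Type*) [TopologicalSpace X] : TopologicalSpace (MLS X) :=
  TopologicalSpace.induced Subtype.val (lowerVietoris X)


open Filter Topology

lemma isLimitSet_iff {X : Type*} [TopologicalSpace X] (L : Set X) :
    IsLimitSet L ↔ (⨅ x ∈ L, 𝓝 x).NeBot := by
  constructor
  · rintro ⟨F, hF, h⟩
    exact Filter.neBot_of_le (le_iInf₂ h)
  · intro h
    exact ⟨_, h, fun x hx => iInf₂_le x hx⟩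

lemma exists_maxLimitSet_superset {X : Type*} [TopologicalSpace X] {L₀ : Set X}
    (h : IsLimitSet L₀) : ∃ M, IsMaxLimitSet M ∧ L₀ ⊆ M := by
  obtain ⟨M, hsubM, hMmax⟩ := zorn_subset_nonempty {L : Set X | IsLimitSet L ∧ L₀ ⊆ L}
    (fun c hc hchain hne => by
      refine ⟨⋃₀ c, ⟨?_, ?_⟩, fun s hs => Set.subset_sUnion_of_mem hs⟩
      · rw [isLimitSet_iff]
        have : (⨅ L : c, ⨅ x ∈ (L : Set X), 𝓝 x).NeBot := by
          haveI : Nonempty c := hne.to_subtype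
          refine Filter.iInf_neBot_of_directed' ?_ ?_
          · rintro ⟨L, hL⟩ ⟨L', hL'⟩
            rcases hchain.total hL hL' with hsub | hsub
            · exact ⟨⟨L', hL'⟩, le_iInf₂ fun x hx => iInf₂_le x (hsub hx),
                le_refl _⟩
            · exact ⟨⟨L, hL⟩, le_refl _,
                le_iInf₂ fun x hx => iInf₂_le x (hsub hx)⟩
          · rintro ⟨L, hL⟩
            exact (isLimitSet_iff L).1 (hc hL).1
        refine Filter.neBot_of_le (f := ⨅ L : c, ⨅ x ∈ (L : Set X), 𝓝 x) ?_
        refine le_iInf₂ fun x hx => ?_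
        obtain ⟨L, hLc, hxL⟩ := hx
        exact le_trans (iInf_le _ ⟨L, hLc⟩) (iInf₂_le x hxL)
      · obtain ⟨L, hLc⟩ := hne
        exact (hc hLc).2.trans (Set.subset_sUnion_of_mem hLc))
    L₀ ⟨h, subset_rfl⟩
  refine ⟨M, ⟨hMmax.prop.1, fun L hL hsub => ?_⟩, hsubM⟩
  exact subset_antisymm (hMmax.2 ⟨hL, hsubM.trans hsub⟩ hsub) hsub

/-- Under the hypotheses of the retraction lemma, every maximal limit set of `Y` has the
form `ψ⁻¹(M₁ × M₂)` for maximal limit sets `M₁` of `X₁` and `M₂` of `X₂`. -/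
theorem maxLimitSet_eq_preimage_prod {X₁ X₂ Y : Type*} [TopologicalSpace X₁]
    [TopologicalSpace X₂] [TopologicalSpace Y] (φ : X₁ × X₂ → Y)
    (hφ : Topology.IsEmbedding φ) (hdense : DenseRange φ)
    (ψ : Y → X₁ × X₂) (hψ : Continuous ψ) (hretr : ψ ∘ φ = id)
    (hcl : ∀ (M₁ : Set X₁) (M₂ : Set X₂), IsMaxLimitSet M₁ → IsMaxLimitSet M₂ →
      ψ ⁻¹' (M₁ ×ˢ M₂) = closure (φ '' (M₁ ×ˢ M₂)))
    {M : Set Y} (hM : IsMaxLimitSet M) :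
    ∃ (M₁ : Set X₁) (M₂ : Set X₂), IsMaxLimitSet M₁ ∧ IsMaxLimitSet M₂ ∧
      M = ψ ⁻¹' (M₁ ×ˢ M₂) := by
  obtain ⟨⟨F, hFne, hFconv⟩, hmax⟩ := hM
  haveI := hFne
  have hMeq : M = {y | F ≤ 𝓝 y} :=
    (hmax _ ⟨F, hFne, fun x hx => hx⟩ (fun y hy => hFconv y hy)).symm
  have hL₁ : IsLimitSet {x : X₁ | (F.map ψ).map Prod.fst ≤ 𝓝 x} :=
    ⟨(F.map ψ).map Prod.fst, Filter.map_neBot, fun x hx => hx⟩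
  have hL₂ : IsLimitSet {x : X₂ | (F.map ψ).map Prod.snd ≤ 𝓝 x} :=
    ⟨(F.map ψ).map Prod.snd, Filter.map_neBot, fun x hx => hx⟩
  obtain ⟨M₁, hM₁, hsub₁⟩ := exists_maxLimitSet_superset hL₁
  obtain ⟨M₂, hM₂, hsub₂⟩ := exists_maxLimitSet_superset hL₂
  refine ⟨M₁, M₂, hM₁, hM₂, ?_⟩
  set H₁ : Filter X₁ := ⨅ x ∈ M₁, 𝓝 x with hH₁
  set H₂ : Filter X₂ := ⨅ x ∈ M₂, 𝓝 x with hH₂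
  haveI : H₁.NeBot := (isLimitSet_iff M₁).1 hM₁.1
  haveI : H₂.NeBot := (isLimitSet_iff M₂).1 hM₂.1
  set N : Set Y := ψ ⁻¹' (M₁ ×ˢ M₂) with hN
  have hNcl : N = closure (φ '' (M₁ ×ˢ M₂)) := hcl M₁ M₂ hM₁ hM₂
  -- N is a limit set of Y
  have hNlim : IsLimitSet N := by
    refine ⟨(H₁ ×ˢ H₂).map φ, Filter.map_neBot, fun y hy => ?_⟩
    rw [hNcl] at hy
    intro U hU
    obtain ⟨V, hVU, hVopen, hyV⟩ := mem_nhds_iff.1 hU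
    obtain ⟨a, haV, p, hp, hpa⟩ := mem_closure_iff_nhds.1 hy V (hVopen.mem_nhds hyV)
    have hprod : H₁ ×ˢ H₂ ≤ 𝓝 p := by
      rw [nhds_prod_eq]
      exact Filter.prod_mono (iInf₂_le p.1 hp.1) (iInf₂_le p.2 hp.2)
    have : φ ⁻¹' V ∈ 𝓝 p := by
      apply hφ.continuous.continuousAt
      rw [hpa]
      exact hVopen.mem_nhds haV
    exact Filter.mem_map.2 (Filter.mem_of_superset (hprod this)
      (Set.preimage_mono hVU))
  -- M ⊆ N
  have hMN : M ⊆ N := by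
    intro y hy
    have hFy : F ≤ 𝓝 y := hFconv y hy
    have h1 : (F.map ψ) ≤ 𝓝 (ψ y) := le_trans (Filter.map_mono hFy) (hψ.tendsto y)
    constructor
    · exact hsub₁ (le_trans (Filter.map_mono h1) (continuous_fst.tendsto (ψ y)))
    · exact hsub₂ (le_trans (Filter.map_mono h1) (continuous_snd.tendsto (ψ y)))
  exact (hmax N hNlim hMN).symm
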